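/- Let 0 < τ < √2, α = 1 − τ²/2, β = √(τ² − τ⁴/4), I(η) = Pr_{X,Y ~ N(0,1), independent}[X ≥ η and αX + βY ≥ η], and Λ(η) = I(η)/Φ_c(η). Then for 0 < μ < 1/2, the derivative of μ ↦ Λ(Φ_c^{−1}(μ)) equals Π(Φ_c^{−1}(μ)), where Π(η) = ( 2·Φ_c(η)·Φ_c((1−α)η/β) − I(η) ) / Φ_c(η)². -/

import Mathlib

open MeasureTheory ProbabilityTheory Real

noncomputable section

/-- `Φ_c(η) = Pr_{X ~ N(0,1)}[X ≥ η]`. -/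
def gaussTail (η : ℝ) : ℝ := (gaussianReal 0 1 (Set.Ici η)).toReal

/-- The inverse of `Φ_c` on `(0,1)`: since `Φ_c` is continuous and strictly decreasing,
`Φ_c⁻¹(p) = sup {η : Φ_c(η) ≥ p}` for `p ∈ (0,1)`. -/
def gaussTailInv (p : ℝ) : ℝ := sSup {η : ℝ | p ≤ gaussTail η}

/-- `I(η) = Pr[X ≥ η ∧ αX + βY ≥ η]` for independent standard Gaussians `X, Y`. -/
def jointTail (α β η : ℝ) : ℝ :=
  (((gaussianReal 0 1).prod (gaussianReal 0 1))
      {z : ℝ × ℝ | η ≤ z.1 ∧ η ≤ α * z.1 + β * z.2}).toReal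

/-- `Π(η) = (2 Φ_c(η) Φ_c((1-α)η/β) - I(η)) / Φ_c(η)²`. -/
def PiFn (α β η : ℝ) : ℝ :=
  (2 * gaussTail η * gaussTail ((1 - α) * η / β) - jointTail α β η) / (gaussTail η) ^ 2

lemma pdf_cont : Continuous (gaussianPDFReal 0 1) := by
  unfold gaussianPDFReal; fun_prop

lemma pdf_int : Integrable (gaussianPDFReal 0 1) := integrable_gaussianPDFReal 0 1

lemma pdf_eq (x : ℝ) : gaussianPDFReal 0 1 x = (Real.sqrt (2*π))⁻¹ * Real.exp (-x^2/2) := by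
  unfold gaussianPDFReal
  norm_num

lemma pdf_le (x : ℝ) : gaussianPDFReal 0 1 x ≤ (Real.sqrt (2 * π))⁻¹ := by
  rw [pdf_eq]
  have h1 : Real.exp (-x ^ 2 / 2) ≤ 1 := by
    rw [Real.exp_le_one_iff]
    nlinarith [sq_nonneg x]
  nlinarith [Real.sqrt_nonneg (2*π), h1, Real.exp_pos (-x^2/2), inv_nonneg.mpr (Real.sqrt_nonneg (2*π))]

lemma gaussTail_eq (η : ℝ) : gaussTail η = ∫ x in Set.Ici η, gaussianPDFReal 0 1 x := by
  rw [gaussTail, gaussianReal_apply_eq_integral 0 one_ne_zero,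
    ENNReal.toReal_ofReal (setIntegral_nonneg measurableSet_Ici fun x _ => gaussianPDFReal_nonneg 0 1 x)]

lemma gaussTail_eq' (η : ℝ) : gaussTail η = 1 - ∫ x in Set.Iic η, gaussianPDFReal 0 1 x := by
  rw [gaussTail_eq, integral_Ici_eq_integral_Ioi, eq_sub_iff_add_eq, add_comm,
    intervalIntegral.integral_Iic_add_Ioi pdf_int.integrableOn pdf_int.integrableOn,
    integral_gaussianPDFReal_eq_one 0 one_ne_zero]

lemma gaussTail_sub (u v : ℝ) :
    gaussTail u - gaussTail v = ∫ x in u..v, gaussianPDFReal 0 1 x := by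
  rw [gaussTail_eq', gaussTail_eq',
    ← intervalIntegral.integral_Iic_sub_Iic pdf_int.integrableOn pdf_int.integrableOn]
  ring

lemma hasDerivAt_gaussTail (η : ℝ) : HasDerivAt gaussTail (-(gaussianPDFReal 0 1 η)) η := by
  have key : ∀ x : ℝ, gaussTail x = gaussTail 0 - ∫ t in (0:ℝ)..x, gaussianPDFReal 0 1 t := by
    intro x
    have := gaussTail_sub 0 x
    linarith
  have h1 : HasDerivAt (fun x => ∫ t in (0:ℝ)..x, gaussianPDFReal 0 1 t)
      (gaussianPDFReal 0 1 η) η :=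
    intervalIntegral.integral_hasDerivAt_right pdf_int.intervalIntegrable
      pdf_cont.stronglyMeasurable.stronglyMeasurableAtFilter pdf_cont.continuousAt
  have h2 := (hasDerivAt_const η (gaussTail 0)).sub h1
  simp only [zero_sub] at h2
  exact h2.congr_of_eventuallyEq (Filter.Eventually.of_forall key)

lemma gaussTail_cont : Continuous gaussTail := by
  have : ∀ x : ℝ, ContinuousAt gaussTail x := fun x => (hasDerivAt_gaussTail x).continuousAt
  exact continuous_iff_continuousAt.mpr this

lemma gaussTail_strictAnti : StrictAnti gaussTail := by
  intro a b hab
  have h := gaussTail_sub a b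
  have hpos : 0 < ∫ x in a..b, gaussianPDFReal 0 1 x :=
    intervalIntegral.intervalIntegral_pos_of_pos pdf_int.intervalIntegrable
      (fun x => gaussianPDFReal_pos 0 1 x one_ne_zero) hab
  linarith

lemma gaussTail_lipschitz (u v : ℝ) :
    |gaussTail u - gaussTail v| ≤ (Real.sqrt (2 * π))⁻¹ * |v - u| := by
  rw [gaussTail_sub]
  have := intervalIntegral.norm_integral_le_of_norm_le_const (a := u) (b := v)
    (C := (Real.sqrt (2 * π))⁻¹) (f := gaussianPDFReal 0 1) ?_
  · simpa [Real.norm_eq_abs] using this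
  · intro x _
    rw [Real.norm_eq_abs, abs_of_nonneg (gaussianPDFReal_nonneg 0 1 x)]
    exact pdf_le x

lemma gaussTail_pos (η : ℝ) : 0 < gaussTail η := by
  rw [gaussTail_eq]
  have h := gaussTail_sub η (η + 1)
  have hpos : 0 < ∫ x in η..(η+1), gaussianPDFReal 0 1 x :=
    intervalIntegral.intervalIntegral_pos_of_pos pdf_int.intervalIntegrable
      (fun x => gaussianPDFReal_pos 0 1 x one_ne_zero) (by linarith)
  have h2 : 0 ≤ gaussTail (η + 1) := by
    rw [gaussTail]; exact ENNReal.toReal_nonneg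
  rw [← gaussTail_eq]; linarith

lemma gaussTail_lt_one (η : ℝ) : gaussTail η < 1 := by
  have h := gaussTail_sub (η - 1) η
  have hpos : 0 < ∫ x in (η-1)..η, gaussianPDFReal 0 1 x :=
    intervalIntegral.intervalIntegral_pos_of_pos pdf_int.intervalIntegrable
      (fun x => gaussianPDFReal_pos 0 1 x one_ne_zero) (by linarith)
  have h2 : gaussTail (η - 1) ≤ 1 := by
    rw [gaussTail]
    exact ENNReal.toReal_le_of_le_ofReal one_pos.le (by simpa using prob_le_one)
  linarith

lemma tendsto_gaussTail_atTop : Filter.Tendsto gaussTail Filter.atTop (nhds 0) := by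
  have h1 : Filter.Tendsto (fun x => ∫ t in Set.Iic x, gaussianPDFReal 0 1 t)
      Filter.atTop (nhds 1) := by
    have hm := tendsto_measure_Iic_atTop (gaussianReal 0 1)
    rw [measure_univ] at hm
    have := (ENNReal.tendsto_toReal ENNReal.one_ne_top).comp hm
    simp only [ENNReal.toReal_one] at this
    refine this.congr fun x => ?_
    simp only [Function.comp_apply]
    rw [gaussianReal_apply_eq_integral 0 one_ne_zero,
      ENNReal.toReal_ofReal (setIntegral_nonneg measurableSet_Iic fun t _ => gaussianPDFReal_nonneg 0 1 t)]
  have : Filter.Tendsto (fun x => 1 - ∫ t in Set.Iic x, gaussianPDFReal 0 1 t)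
      Filter.atTop (nhds (1 - 1)) := (tendsto_const_nhds).sub h1
  simp only [sub_self] at this
  exact this.congr fun x => (gaussTail_eq' x).symm

lemma tendsto_gaussTail_atBot : Filter.Tendsto gaussTail Filter.atBot (nhds 1) := by
  have hm := tendsto_measure_Ici_atBot (gaussianReal 0 1)
  rw [measure_univ] at hm
  have h := (ENNReal.tendsto_toReal ENNReal.one_ne_top).comp hm
  simp only [ENNReal.toReal_one] at h
  exact h.congr fun x => rfl

lemma exists_gaussTail_eq {p : ℝ} (h0 : 0 < p) (h1 : p < 1) : ∃ η, gaussTail η = p := by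
  obtain ⟨b, hb⟩ : ∃ b, gaussTail b < p :=
    (tendsto_gaussTail_atTop.eventually_lt_const h0).exists
  obtain ⟨a, ha⟩ : ∃ a, p < gaussTail a :=
    (tendsto_gaussTail_atBot.eventually_const_lt h1).exists
  have hab : a < b := by
    by_contra h
    push_neg at h
    have := gaussTail_strictAnti.antitone h
    linarith
  have := intermediate_value_Icc' hab.le gaussTail_cont.continuousOn
  obtain ⟨η, _, hη⟩ := this ⟨hb.le, ha.le⟩
  exact ⟨η, hη⟩

lemma gaussTailInv_eq {η p : ℝ} (h : gaussTail η = p) : gaussTailInv p = η := by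
  have hset : {x : ℝ | p ≤ gaussTail x} = Set.Iic η := by
    ext x
    simp only [Set.mem_setOf_eq, Set.mem_Iic, ← h]
    exact gaussTail_strictAnti.le_iff_ge
  rw [gaussTailInv, hset, csSup_Iic]

lemma gaussTail_gaussTailInv {p : ℝ} (h0 : 0 < p) (h1 : p < 1) :
    gaussTail (gaussTailInv p) = p := by
  obtain ⟨η, hη⟩ := exists_gaussTail_eq h0 h1
  rw [gaussTailInv_eq hη, hη]

lemma continuousAt_gaussTailInv {p : ℝ} (h0 : 0 < p) (h1 : p < 1) :
    ContinuousAt gaussTailInv p := by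
  obtain ⟨η₀, hη₀⟩ := exists_gaussTail_eq h0 h1
  rw [Metric.continuousAt_iff]
  intro ε εpos
  have l1 : gaussTail (η₀ + ε) < p := hη₀ ▸ gaussTail_strictAnti (by linarith)
  have l2 : p < gaussTail (η₀ - ε) := hη₀ ▸ gaussTail_strictAnti (by linarith)
  refine ⟨min (p - gaussTail (η₀ + ε)) (gaussTail (η₀ - ε) - p), by
    apply lt_min <;> linarith, ?_⟩
  intro y hy
  rw [Real.dist_eq] at hy ⊢
  obtain ⟨hy1, hy2⟩ := abs_lt.mp hy
  have hmin1 := min_le_left (p - gaussTail (η₀ + ε)) (gaussTail (η₀ - ε) - p)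
  have hmin2 := min_le_right (p - gaussTail (η₀ + ε)) (gaussTail (η₀ - ε) - p)
  have hy1' : gaussTail (η₀ + ε) < y := by linarith
  have hy2' : y < gaussTail (η₀ - ε) := by linarith
  have hy0 : 0 < y := (gaussTail_pos _).trans hy1'
  have hyl : y < 1 := hy2'.trans (gaussTail_lt_one _)
  obtain ⟨η, hη⟩ := exists_gaussTail_eq hy0 hyl
  rw [gaussTailInv_eq hη, gaussTailInv_eq hη₀]
  have e1 : η < η₀ + ε := by
    by_contra h
    push_neg at h
    have := gaussTail_strictAnti.antitone h
    rw [hη] at this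
    linarith
  have e2 : η₀ - ε < η := by
    by_contra h
    push_neg at h
    have := gaussTail_strictAnti.antitone h
    rw [hη] at this
    linarith
  exact abs_lt.mpr ⟨by linarith, by linarith⟩

lemma hasDerivAt_gaussTailInv {p : ℝ} (h0 : 0 < p) (h1 : p < 1) :
    HasDerivAt gaussTailInv (-(gaussianPDFReal 0 1 (gaussTailInv p)))⁻¹ p := by
  apply HasDerivAt.of_local_left_inverse (continuousAt_gaussTailInv h0 h1)
    (hasDerivAt_gaussTail _)
  · exact neg_ne_zero.mpr (gaussianPDFReal_pos 0 1 _ one_ne_zero).ne'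
  · filter_upwards [isOpen_Ioo.mem_nhds (Set.mem_Ioo.mpr ⟨h0, h1⟩)] with y hy
    exact gaussTail_gaussTailInv hy.1 hy.2

lemma measurable_tail : Measurable (fun t : ℝ => gaussianReal 0 1 (Set.Ici t)) := by
  have h : Antitone (fun t : ℝ => gaussianReal 0 1 (Set.Ici t)) := fun a b hab =>
    measure_mono (Set.Ici_subset_Ici.mpr hab)
  exact h.measurable

lemma jointTail_eq {α β : ℝ} (hβ : 0 < β) (η : ℝ) :
    jointTail α β η
      = ∫ x in Set.Ici η, gaussTail ((η - α * x) / β) * gaussianPDFReal 0 1 x := by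
  set ν := gaussianReal 0 1 with hν
  have hS : MeasurableSet {z : ℝ × ℝ | η ≤ z.1 ∧ η ≤ α * z.1 + β * z.2} :=
    (measurableSet_le measurable_const measurable_fst).inter
      (measurableSet_le measurable_const
        ((measurable_fst.const_mul α).add (measurable_snd.const_mul β)))
  rw [jointTail, Measure.prod_apply hS]
  have hpt : ∀ x : ℝ, ν (Prod.mk x ⁻¹' {z : ℝ × ℝ | η ≤ z.1 ∧ η ≤ α * z.1 + β * z.2})
      = Set.indicator (Set.Ici η) (fun x => ν (Set.Ici ((η - α * x) / β))) x := by
    intro x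
    by_cases hx : η ≤ x
    · rw [Set.indicator_of_mem (Set.mem_Ici.mpr hx)]
      congr 1
      ext y
      simp only [Set.mem_preimage, Set.mem_setOf_eq, Set.mem_Ici]
      constructor
      · rintro ⟨-, h2⟩
        rw [div_le_iff₀' hβ]  -- maybe wrong name
        linarith
      · intro h
        refine ⟨hx, ?_⟩
        rw [div_le_iff₀' hβ] at h
        linarith
    · rw [Set.indicator_of_notMem (by simpa using hx)]
      convert measure_empty
      · ext y
        simp only [Set.mem_preimage, Set.mem_setOf_eq, Set.mem_empty_iff_false, iff_false]
        rintro ⟨h1, -⟩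
        exact hx h1
      · infer_instance
  rw [lintegral_congr hpt, lintegral_indicator measurableSet_Ici _]
  have hrw : ν.restrict (Set.Ici η) = (volume.restrict (Set.Ici η)).withDensity (gaussianPDF 0 1) := by
    rw [hν, gaussianReal_of_var_ne_zero 0 one_ne_zero, restrict_withDensity measurableSet_Ici]
  have hg : Measurable fun x : ℝ => ν (Set.Ici ((η - α * x) / β)) :=
    measurable_tail.comp (by fun_prop)
  rw [hrw, lintegral_withDensity_eq_lintegral_mul _ (measurable_gaussianPDF 0 1) hg]
  have hfin : ∀ᵐ x ∂(volume.restrict (Set.Ici η)),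
      gaussianPDF 0 1 x * ν (Set.Ici ((η - α * x) / β)) < ⊤ := by
    filter_upwards with x
    exact ENNReal.mul_lt_top ENNReal.ofReal_lt_top (prob_le_one.trans_lt ENNReal.one_lt_top)
  simp only [Pi.mul_apply]
  rw [← integral_toReal (f := fun x => gaussianPDF 0 1 x * ν (Set.Ici ((η - α * x) / β)))
    ((measurable_gaussianPDF 0 1).mul hg).aemeasurable hfin]
  refine setIntegral_congr_fun measurableSet_Ici fun x _ => ?_
  rw [ENNReal.toReal_mul]
  rw [gaussianPDF, ENNReal.toReal_ofReal (gaussianPDFReal_nonneg 0 1 x)]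
  rw [mul_comm]
  rfl

lemma scaled_tail {β : ℝ} (hβ : 0 < β) (c a : ℝ) :
    ∫ x in Set.Ici a, (1/β) * gaussianPDFReal 0 1 ((x - c)/β) = gaussTail ((a - c)/β) := by
  set v : NNReal := ⟨β^2, sq_nonneg β⟩ with hv
  have hv0 : v ≠ 0 := by
    intro h
    rw [← NNReal.coe_inj] at h
    simp only [hv, NNReal.coe_mk, NNReal.coe_zero] at h
    have h' : β^2 = 0 := h
    nlinarith
  have hpdf : ∀ x, (1/β) * gaussianPDFReal 0 1 ((x - c)/β) = gaussianPDFReal c v x := by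
    intro x
    rw [pdf_eq]
    unfold gaussianPDFReal
    have hcoe : (v : ℝ) = β^2 := rfl
    rw [hcoe]
    have h1 : Real.sqrt (2*π*β^2) = Real.sqrt (2*π) * β := by
      rw [show (2*π*β^2 : ℝ) = (2*π) * β^2 by ring, Real.sqrt_mul (by positivity),
        Real.sqrt_sq hβ.le]
    have h2 : -((x - c)/β)^2/2 = -(x-c)^2/(2*β^2) := by
      rw [div_pow]
      ring
    rw [h1, h2, mul_inv]
    ring
  simp_rw [hpdf]
  have h3 := gaussianReal_apply_eq_integral c hv0 (Set.Ici a)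
  have h4 : ∫ x in Set.Ici a, gaussianPDFReal c v x = (gaussianReal c v (Set.Ici a)).toReal := by
    rw [h3, ENNReal.toReal_ofReal
      (setIntegral_nonneg measurableSet_Ici fun x _ => gaussianPDFReal_nonneg c v x)]
  rw [h4]
  have hmap : ((gaussianReal 0 1).map (β * ·)).map (· + c) = gaussianReal c v := by
    rw [gaussianReal_map_const_mul (μ := 0) (v := 1) β, gaussianReal_map_add_const c]
    congr 1
    · ring
    · simp [hv]; rfl
  have happ : gaussianReal c v (Set.Ici a) = gaussianReal 0 1 (Set.Ici ((a - c)/β)) := by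
    rw [← hmap, Measure.map_apply (measurable_add_const c) measurableSet_Ici,
      Measure.map_apply (measurable_const_mul β)
        (measurableSet_preimage (measurable_add_const c) measurableSet_Ici)]
    congr 1
    ext x
    simp only [Set.mem_preimage, Set.mem_Ici]
    rw [div_le_iff₀ hβ]
    constructor <;> intro h <;> linarith
  rw [happ]
  rfl

lemma integral_Ici_sub {g : ℝ → ℝ} (hi : Integrable g) (u v : ℝ) :
    (∫ x in Set.Ici u, g x) - ∫ x in Set.Ici v, g x = ∫ x in u..v, g x := by
  have h : ∀ w : ℝ, ∫ x in Set.Ici w, g x = (∫ x, g x) - ∫ x in Set.Iic w, g x := by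
    intro w
    rw [integral_Ici_eq_integral_Ioi, eq_sub_iff_add_eq, add_comm,
      intervalIntegral.integral_Iic_add_Ioi hi.integrableOn hi.integrableOn]
  rw [h, h, ← intervalIntegral.integral_Iic_sub_Iic hi.integrableOn hi.integrableOn]
  ring

lemma hasDerivAt_integral_Ici {g : ℝ → ℝ} (hc : Continuous g) (hi : Integrable g) (a : ℝ) :
    HasDerivAt (fun η => ∫ x in Set.Ici η, g x) (-(g a)) a := by
  have key : ∀ η : ℝ, ∫ x in Set.Ici η, g x
      = (∫ x in Set.Ici (0:ℝ), g x) - ∫ t in (0:ℝ)..η, g t := by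
    intro η
    have := integral_Ici_sub hi 0 η
    linarith
  have h1 : HasDerivAt (fun η => ∫ t in (0:ℝ)..η, g t) (g a) a :=
    intervalIntegral.integral_hasDerivAt_right hi.intervalIntegrable
      hc.stronglyMeasurable.stronglyMeasurableAtFilter hc.continuousAt
  have h2 := (hasDerivAt_const a (∫ x in Set.Ici (0:ℝ), g x)).sub h1
  simp only [zero_sub] at h2
  exact h2.congr_of_eventuallyEq (Filter.Eventually.of_forall key)

section deriv
variable {α β : ℝ}

lemma T_cont (b : ℝ) (hβ : 0 < β) :
    Continuous (fun x : ℝ => gaussTail ((b - α * x) / β) * gaussianPDFReal 0 1 x) :=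
  (gaussTail_cont.comp (by fun_prop)).mul pdf_cont

lemma T_int (b : ℝ) (hβ : 0 < β) :
    Integrable (fun x : ℝ => gaussTail ((b - α * x) / β) * gaussianPDFReal 0 1 x) := by
  refine pdf_int.mono ((T_cont b hβ).aestronglyMeasurable) (Filter.Eventually.of_forall fun x => ?_)
  rw [Real.norm_eq_abs, Real.norm_eq_abs,
    abs_of_nonneg (mul_nonneg (gaussTail_pos _).le (gaussianPDFReal_nonneg 0 1 x)),
    abs_of_nonneg (gaussianPDFReal_nonneg 0 1 x)]
  nlinarith [gaussTail_pos ((b - α * x)/β), gaussTail_lt_one ((b - α * x)/β),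
    gaussianPDFReal_nonneg 0 1 x]

lemma pdf_prod_identity (hβ : 0 < β) (hαβ : α^2 + β^2 = 1) (b x : ℝ) :
    (1/β) * gaussianPDFReal 0 1 ((b - α*x)/β) * gaussianPDFReal 0 1 x
      = gaussianPDFReal 0 1 b * ((1/β) * gaussianPDFReal 0 1 ((x - α*b)/β)) := by
  have hE : -((b-α*x)/β)^2/2 + -x^2/2 = -b^2/2 + -((x-α*b)/β)^2/2 := by
    rw [div_pow, div_pow]
    field_simp
    linear_combination (b^2-x^2) * hαβ
  have h1 : Real.exp (-((b-α*x)/β)^2/2) * Real.exp (-x^2/2)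
      = Real.exp (-b^2/2) * Real.exp (-((x-α*b)/β)^2/2) := by
    rw [← Real.exp_add, ← Real.exp_add, hE]
  rw [pdf_eq, pdf_eq, pdf_eq, pdf_eq]
  linear_combination ((Real.sqrt (2*π))⁻¹ * (Real.sqrt (2*π))⁻¹ / β) * h1

lemma hasDerivAt_H (hβ : 0 < β) (η₀ : ℝ) :
    HasDerivAt (fun b => ∫ x in Set.Ici η₀, gaussTail ((b - α * x) / β) * gaussianPDFReal 0 1 x)
      (∫ x in Set.Ici η₀,
        (-(gaussianPDFReal 0 1 ((η₀ - α * x) / β)) * (1/β)) * gaussianPDFReal 0 1 x) η₀ := by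
  have key := hasDerivAt_integral_of_dominated_loc_of_lip
    (F := fun b x => gaussTail ((b - α * x) / β) * gaussianPDFReal 0 1 x)
    (F' := fun x => (-(gaussianPDFReal 0 1 ((η₀ - α * x) / β)) * (1/β)) * gaussianPDFReal 0 1 x)
    (x₀ := η₀) (bound := fun x => (Real.sqrt (2*π))⁻¹ / β * gaussianPDFReal 0 1 x)
    (μ := volume.restrict (Set.Ici η₀)) (s := Metric.ball η₀ 1) (Metric.ball_mem_nhds η₀ one_pos)
    (Filter.Eventually.of_forall fun b => ((T_cont b hβ).aestronglyMeasurable).restrict)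
    ((T_int η₀ hβ).restrict)
    (Continuous.aestronglyMeasurable (by
      exact ((pdf_cont.comp (by fun_prop)).neg.mul continuous_const).mul pdf_cont)).restrict
    (Filter.Eventually.of_forall fun x => ?_)
    (((pdf_int.const_mul _).restrict))
    (Filter.Eventually.of_forall fun x => ?_)
  · exact key.2
  · -- Lipschitz
    apply LipschitzWith.lipschitzOnWith
    apply LipschitzWith.of_dist_le_mul
    intro b b'
    rw [Real.dist_eq, Real.dist_eq, ← sub_mul, abs_mul,
      abs_of_nonneg (gaussianPDFReal_nonneg 0 1 x)]
    have hL := gaussTail_lipschitz ((b - α * x) / β) ((b' - α * x) / β)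
    have habs : |(b' - α * x)/β - (b - α * x)/β| = |b' - b| / β := by
      rw [div_sub_div_same, abs_div, abs_of_pos hβ]
      congr 2
      ring
    rw [habs] at hL
    have hcoe : ((Real.nnabs ((Real.sqrt (2*π))⁻¹ / β * gaussianPDFReal 0 1 x)) : ℝ)
        = (Real.sqrt (2*π))⁻¹ / β * gaussianPDFReal 0 1 x := by
      rw [Real.coe_nnabs, abs_of_nonneg]
      exact mul_nonneg (by positivity) (gaussianPDFReal_nonneg 0 1 x)
    rw [hcoe]
    have hpdfle := pdf_le x
    have h0 : (0:ℝ) ≤ |b' - b| / β := by positivity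
    calc |gaussTail ((b - α * x) / β) - gaussTail ((b' - α * x) / β)| * gaussianPDFReal 0 1 x
        ≤ ((Real.sqrt (2*π))⁻¹ * (|b' - b| / β)) * gaussianPDFReal 0 1 x := by
          apply mul_le_mul_of_nonneg_right hL (gaussianPDFReal_nonneg 0 1 x)
      _ = (Real.sqrt (2*π))⁻¹ / β * gaussianPDFReal 0 1 x * |b - b'| := by
          rw [abs_sub_comm]
          ring
  · -- differentiability
    have inner : HasDerivAt (fun b : ℝ => (b - α * x) / β) (1/β) η₀ := by
      have := ((hasDerivAt_id η₀).sub_const (α * x)).div_const β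
      simpa using this
    exact ((hasDerivAt_gaussTail ((η₀ - α * x)/β)).comp η₀ inner).mul_const _
end deriv

section deriv2
variable {α β : ℝ}

lemma D_eval (hβ : 0 < β) (hαβ : α^2 + β^2 = 1) (η₀ : ℝ) :
    (∫ x in Set.Ici η₀,
      (-(gaussianPDFReal 0 1 ((η₀ - α * x) / β)) * (1/β)) * gaussianPDFReal 0 1 x)
    = -(gaussianPDFReal 0 1 η₀ * gaussTail ((η₀ - α * η₀) / β)) := by
  have h1 : ∀ x : ℝ, (-(gaussianPDFReal 0 1 ((η₀ - α * x) / β)) * (1/β)) * gaussianPDFReal 0 1 x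
      = -(gaussianPDFReal 0 1 η₀ * ((1/β) * gaussianPDFReal 0 1 ((x - α*η₀)/β))) := by
    intro x
    have h := pdf_prod_identity hβ hαβ η₀ x
    linear_combination -h
  rw [setIntegral_congr_fun measurableSet_Ici (fun x _ => h1 x), integral_neg,
    integral_const_mul, scaled_tail hβ (α*η₀) η₀]

lemma hasDerivAt_J (hβ : 0 < β) (hαβ : α^2 + β^2 = 1) (η₀ : ℝ) :
    HasDerivAt (fun η => ∫ x in Set.Ici η, gaussTail ((η - α * x) / β) * gaussianPDFReal 0 1 x)
      (-2 * gaussianPDFReal 0 1 η₀ * gaussTail ((1 - α) * η₀ / β)) η₀ := by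
  have sqrtpos : 0 < Real.sqrt (2*π) := Real.sqrt_pos.mpr (by positivity)
  set C : ℝ := (Real.sqrt (2*π))⁻¹ * ((Real.sqrt (2*π))⁻¹ / β) with hC
  have hCpos : 0 < C := by rw [hC]; positivity
  have hTdiff_bound : ∀ b x : ℝ,
      |gaussTail ((b - α * x) / β) * gaussianPDFReal 0 1 x
        - gaussTail ((η₀ - α * x) / β) * gaussianPDFReal 0 1 x| ≤ C * |b - η₀| := by
    intro b x
    rw [← sub_mul, abs_mul, abs_of_nonneg (gaussianPDFReal_nonneg 0 1 x)]
    have hL := gaussTail_lipschitz ((b - α * x) / β) ((η₀ - α * x) / β)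
    have habs : |(η₀ - α * x)/β - (b - α * x)/β| = |η₀ - b| / β := by
      rw [div_sub_div_same, abs_div, abs_of_pos hβ]
      congr 2
      ring
    rw [habs] at hL
    have hpdfle := pdf_le x
    have hpdfnn := gaussianPDFReal_nonneg 0 1 x
    calc |gaussTail ((b - α * x) / β) - gaussTail ((η₀ - α * x) / β)| * gaussianPDFReal 0 1 x
        ≤ ((Real.sqrt (2*π))⁻¹ * (|η₀ - b| / β)) * gaussianPDFReal 0 1 x :=
          mul_le_mul_of_nonneg_right hL hpdfnn
      _ ≤ ((Real.sqrt (2*π))⁻¹ * (|η₀ - b| / β)) * (Real.sqrt (2*π))⁻¹ := by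
          apply mul_le_mul_of_nonneg_left hpdfle
          positivity
      _ = C * |η₀ - b| := by rw [hC]; ring
      _ = C * |b - η₀| := by rw [abs_sub_comm]
  set r : ℝ → ℝ := fun η =>
    (∫ x in Set.Ici η, (gaussTail ((η - α * x) / β) * gaussianPDFReal 0 1 x
        - gaussTail ((η₀ - α * x) / β) * gaussianPDFReal 0 1 x))
      - ∫ x in Set.Ici η₀, (gaussTail ((η - α * x) / β) * gaussianPDFReal 0 1 x
        - gaussTail ((η₀ - α * x) / β) * gaussianPDFReal 0 1 x) with hrdef
  have hrEq : ∀ η, r η = ∫ x in η..η₀,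
      (gaussTail ((η - α * x) / β) * gaussianPDFReal 0 1 x
        - gaussTail ((η₀ - α * x) / β) * gaussianPDFReal 0 1 x) := fun η =>
    integral_Ici_sub ((T_int η hβ).sub (T_int η₀ hβ)) η η₀
  have hrBound : ∀ η, |r η| ≤ C * |η - η₀| * |η₀ - η| := by
    intro η
    rw [hrEq]
    have hb := intervalIntegral.norm_integral_le_of_norm_le_const
      (a := η) (b := η₀) (C := C * |η - η₀|)
      (f := fun x => gaussTail ((η - α * x) / β) * gaussianPDFReal 0 1 x
        - gaussTail ((η₀ - α * x) / β) * gaussianPDFReal 0 1 x)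
      (fun x _ => by rw [Real.norm_eq_abs]; exact hTdiff_bound η x)
    simpa [Real.norm_eq_abs] using hb
  have hr00 : r η₀ = 0 := by rw [hrEq]; simp
  have hr0 : HasDerivAt r 0 η₀ := by
    rw [hasDerivAt_iff_isLittleO, Asymptotics.isLittleO_iff]
    intro c hc
    rw [Metric.eventually_nhds_iff]
    refine ⟨c / C, by positivity, fun η hη => ?_⟩
    rw [Real.dist_eq] at hη
    rw [hr00]
    simp only [smul_zero, sub_zero]
    rw [Real.norm_eq_abs, Real.norm_eq_abs]
    have h1 := hrBound η
    have h2 : |η₀ - η| ≤ c / C := by rw [abs_sub_comm]; exact hη.le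
    calc |r η| ≤ C * |η - η₀| * |η₀ - η| := h1
      _ ≤ C * |η - η₀| * (c / C) :=
          mul_le_mul_of_nonneg_left h2 (by positivity)
      _ = c * |η - η₀| := by field_simp
  have hG := hasDerivAt_integral_Ici (T_cont (α := α) η₀ hβ) (T_int (α := α) η₀ hβ) η₀
  have hH := hasDerivAt_H (α := α) hβ η₀
  have hid : ∀ η, ∫ x in Set.Ici η, gaussTail ((η - α * x) / β) * gaussianPDFReal 0 1 x
      = (∫ x in Set.Ici η, gaussTail ((η₀ - α * x) / β) * gaussianPDFReal 0 1 x)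
        + ((∫ x in Set.Ici η₀, gaussTail ((η - α * x) / β) * gaussianPDFReal 0 1 x)
          - (∫ x in Set.Ici η₀, gaussTail ((η₀ - α * x) / β) * gaussianPDFReal 0 1 x))
        + r η := by
    intro η
    simp only [hrdef]
    rw [integral_sub ((T_int η hβ).restrict) ((T_int η₀ hβ).restrict),
        integral_sub ((T_int η hβ).restrict) ((T_int η₀ hβ).restrict)]
    ring
  have hcomb := (hG.add
    (hH.sub_const (∫ x in Set.Ici η₀, gaussTail ((η₀ - α * x) / β) * gaussianPDFReal 0 1 x))).add
      hr0
  have hfinal := hcomb.congr_of_eventuallyEq (Filter.Eventually.of_forall fun η => hid η)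
  refine hfinal.congr_deriv ?_
  rw [D_eval hβ hαβ η₀]
  have e : (η₀ - α * η₀)/β = (1 - α) * η₀ / β := by ring
  rw [e]
  ring

end deriv2

/-- For `0 < τ < √2`, `α = 1 - τ²/2`, `β = √(τ² - τ⁴/4)`, `Λ(η) = I(η)/Φ_c(η)`, and
`0 < μ < 1/2`, the derivative of `μ ↦ Λ(Φ_c⁻¹(μ))` at `μ` equals `Π(Φ_c⁻¹(μ))`. -/
theorem lambda_comp_inv_hasDerivAt (τ α β : ℝ) (hτ0 : 0 < τ) (hτ : τ < Real.sqrt 2)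
    (hα : α = 1 - τ ^ 2 / 2) (hβ : β = Real.sqrt (τ ^ 2 - τ ^ 4 / 4))
    (μ : ℝ) (hμ0 : 0 < μ) (hμ : μ < 1 / 2) :
    HasDerivAt (fun m => jointTail α β (gaussTailInv m) / gaussTail (gaussTailInv m))
      (PiFn α β (gaussTailInv μ)) μ := by
  have h2 : Real.sqrt 2 ^ 2 = 2 := Real.sq_sqrt (by norm_num)
  have hτ2 : τ ^ 2 < 2 := by nlinarith [Real.sqrt_nonneg 2]
  have hvpos : 0 < τ ^ 2 - τ ^ 4 / 4 := by nlinarith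
  have hβpos : 0 < β := hβ ▸ Real.sqrt_pos.mpr hvpos
  have hβ2 : β ^ 2 = τ ^ 2 - τ ^ 4 / 4 := by rw [hβ]; exact Real.sq_sqrt hvpos.le
  have hαβ : α ^ 2 + β ^ 2 = 1 := by rw [hα, hβ2]; ring
  have hμ1 : μ < 1 := by linarith
  set η₀ := gaussTailInv μ with hη₀
  have hΦpos := gaussTail_pos η₀
  have hΦne : gaussTail η₀ ≠ 0 := hΦpos.ne'
  have hppos : 0 < gaussianPDFReal 0 1 η₀ := gaussianPDFReal_pos 0 1 η₀ one_ne_zero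
  have hJ : HasDerivAt (fun η => jointTail α β η)
      (-2 * gaussianPDFReal 0 1 η₀ * gaussTail ((1 - α) * η₀ / β)) η₀ :=
    (hasDerivAt_J hβpos hαβ η₀).congr_of_eventuallyEq
      (Filter.Eventually.of_forall fun η => jointTail_eq hβpos η)
  have hT := hasDerivAt_gaussTail η₀
  have hΛ := hJ.div hT hΦne
  have hInv := hasDerivAt_gaussTailInv hμ0 hμ1
  have hcomp := HasDerivAt.comp μ hΛ hInv
  have hval : ((-2 * gaussianPDFReal 0 1 η₀ * gaussTail ((1 - α) * η₀ / β) * gaussTail η₀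
        - jointTail α β η₀ * -gaussianPDFReal 0 1 η₀) / gaussTail η₀ ^ 2)
        * (-gaussianPDFReal 0 1 η₀)⁻¹ = PiFn α β η₀ := by
    rw [PiFn]
    field_simp
    ring
  rw [← hη₀] at hcomp
  rw [← hval]
  exact hcomp
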